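/- arXiv:1603.04740 — 2 statements merged into one kernel-verified Lean document; each statement's English description precedes it below -/
import Mathlib

section
/- Let G be an additive abelian group and ν : G × ℤ → ℤ a function (abstracting K, t ↦ ν(D₊(K,t))). Suppose there is a function τ : G → ℤ such that for all a ∈ G and t ∈ ℤ, ν(a,t) = 1 if t ≤ τ(a) and ν(a,t) = 0 if t > τ(a). Suppose furthermore: (i) for all a, b ∈ G and t₁, t₂ ∈ ℤ, if ν(a,t₁) = 1 and ν(b,t₂) = 1 then ν(a+b, t₁+t₂) = 1; and (ii) for all a, b ∈ G and t₁, t₂ ∈ ℤ, if ν(a,t₁) = 0 and t₂ ≥ -τ(-b) then ν(a+b, t₁+t₂) = 0. Then for all a, b ∈ G: τ(a) + τ(b) ≤ τ(a+b) ≤ min(τ(a) - τ(-b), τ(b) - τ(-a)). -/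
theorem stmt1 {G : Type*} [AddCommGroup G] (ν : G → ℤ → ℤ) (τ : G → ℤ)
    (hthr : ∀ a t, (t ≤ τ a → ν a t = 1) ∧ (t > τ a → ν a t = 0))
    (h1 : ∀ a b t₁ t₂, ν a t₁ = 1 → ν b t₂ = 1 → ν (a + b) (t₁ + t₂) = 1)
    (h2 : ∀ a b t₁ t₂, ν a t₁ = 0 → t₂ ≥ -τ (-b) → ν (a + b) (t₁ + t₂) = 0) :
    ∀ a b : G, τ a + τ b ≤ τ (a + b) ∧ τ (a + b) ≤ min (τ a - τ (-b)) (τ b - τ (-a)) := by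
  have key : ∀ a b : G, τ (a + b) ≤ τ a - τ (-b) := by
    intro a b
    have h0 : ν a (τ a + 1) = 0 := (hthr a _).2 (by omega)
    have hz : ν (a + b) (τ a + 1 + -τ (-b)) = 0 := h2 a b _ _ h0 le_rfl
    by_contra h
    have := (hthr (a + b) (τ a + 1 + -τ (-b))).1 (by omega)
    omega
  intro a b
  constructor
  · have := h1 a b (τ a) (τ b) ((hthr a _).1 le_rfl) ((hthr b _).1 le_rfl)
    by_contra h
    have := (hthr (a + b) (τ a + τ b)).2 (by omega)
    omega
  · have := key a b
    have := key b a
    rw [add_comm b a] at this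
    omega
end

section
/- Let p be a polynomial with integer coefficients such that for all integers m and n, p(m) + p(n) ≤ p(m+n) and p(m+n) ≤ p(m) - p(-n), and suppose p(1) = 2 and p(2) = 5. Then p(x) = 3x - 1 for all x. -/
theorem stmt9 (p : Polynomial ℤ)
    (hsup : ∀ m n : ℤ, p.eval m + p.eval n ≤ p.eval (m + n))
    (hub : ∀ m n : ℤ, p.eval (m + n) ≤ p.eval m - p.eval (-n))
    (h1 : p.eval 1 = 2) (h2 : p.eval 2 = 5) :
    ∀ x : ℤ, p.eval x = 3 * x - 1 := by
  set B : ℤ := -p.eval (-1) with hB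
  set q : Polynomial ℤ := p.comp (Polynomial.X + 1) - p with hq
  have hqe : ∀ n : ℤ, q.eval n = p.eval (n + 1) - p.eval n := by
    intro n
    simp [hq, Polynomial.eval_comp]
  have hmem : ∀ n : ℤ, q.eval n ∈ Set.Icc (2 : ℤ) B := by
    intro n
    have hlo := hsup n 1
    have hhi := hub n 1
    rw [h1] at hlo
    rw [hqe n]
    refine ⟨by linarith, ?_⟩
    simp only [hB]
    linarith
  haveI : Finite (Set.Icc (2 : ℤ) B) := (Set.finite_Icc 2 B).to_subtype
  obtain ⟨⟨c, hc⟩, hfib⟩ :=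
    Finite.exists_infinite_fiber (fun n : ℤ => (⟨q.eval n, hmem n⟩ : Set.Icc (2 : ℤ) B))
  have hinf : {n : ℤ | (q - Polynomial.C c).IsRoot n}.Infinite := by
    rw [Set.infinite_coe_iff] at hfib
    refine hfib.mono ?_
    intro n hn
    have : q.eval n = c := by
      have := (Set.mem_preimage.mp hn)
      simpa using congrArg Subtype.val this
    simp [Polynomial.IsRoot, this]
  have hqc : q = Polynomial.C c := by
    have h0 := Polynomial.eq_zero_of_infinite_isRoot _ hinf
    linear_combination h0
  have hc3 : c = 3 := by
    have := hqe 1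
    rw [hqc] at this
    norm_num at this
    omega
  have hstep : ∀ n : ℤ, p.eval (n + 1) = p.eval n + 3 := by
    intro n
    have := hqe n
    rw [hqc, hc3] at this
    simp at this
    omega
  have h0 : p.eval 0 = -1 := by
    have := hstep 0
    simp at this
    omega
  intro x
  induction x using Int.induction_on with
  | zero => simpa using h0
  | succ k ih =>
    have := hstep k
    push_cast
    push_cast at ih
    omega
  | pred k ih =>
    have := hstep (-k - 1)
    push_cast
    push_cast at ih
    have e : (-(k:ℤ) - 1) + 1 = -k := by ring
    rw [e] at this
    omega
end
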